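/- Let a_1,…,a_d be nonzero, pairwise distinct real numbers and v = (v_1,…,v_d) ∈ ℝ^d with all v_i ≠ 0. Then for any strictly increasing sequence of natural numbers i_1 < i_2 < … < i_d, the vectors v^{i_j} = ((a_1)^{i_j} v_1, …, (a_d)^{i_j} v_d), j = 1,…,d, span ℝ^d. -/

import Mathlib

open Polynomial

/-- The "logarithmic derivative trick" polynomial `X * p' - m • p` where `m` is the
trailing degree: its coefficients are `(n - m) * p.coeff n`. -/
private noncomputable def rolleAux (p : ℝ[X]) : ℝ[X] :=
  X * derivative p - C (p.natTrailingDegree : ℝ) * p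

private lemma rolleAux_coeff (p : ℝ[X]) (n : ℕ) :
    (rolleAux p).coeff n = ((n : ℝ) - p.natTrailingDegree) * p.coeff n := by
  unfold rolleAux
  rcases n with _ | n
  · simp [coeff_mul_X_pow', coeff_derivative, mul_comm]
  · simp [coeff_X_mul, coeff_derivative]
    ring

private lemma rolleAux_support (p : ℝ[X]) :
    (rolleAux p).support ⊆ p.support.erase p.natTrailingDegree := by
  intro n hn
  rw [mem_support_iff, rolleAux_coeff] at hn
  rw [Finset.mem_erase, mem_support_iff]
  constructor
  · rintro rfl; simp at hn
  · intro h; apply hn; rw [h, mul_zero]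

private lemma rolleAux_root {p : ℝ[X]} {x y : ℝ} (hx : 0 < x) (hxy : x < y)
    (hpx : p.eval x = 0) (hpy : p.eval y = 0) :
    ∃ z ∈ Set.Ioo x y, (rolleAux p).eval z = 0 := by
  set m := p.natTrailingDegree with hm
  set f : ℝ → ℝ := fun t => p.eval t / t ^ m with hf
  set f' : ℝ → ℝ := fun t =>
    ((derivative p).eval t * t ^ m - p.eval t * ((m : ℝ) * t ^ (m - 1))) / (t ^ m) ^ 2 with hf'
  have hcont : ContinuousOn f (Set.Icc x y) := by
    apply ContinuousOn.div (p.continuousOn_aeval.congr (by intro t _; simp))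
      ((continuous_pow m).continuousOn)
    intro t ht
    exact pow_ne_zero _ (ne_of_gt (lt_of_lt_of_le hx ht.1))
  have hderiv : ∀ t ∈ Set.Ioo x y, HasDerivAt f (f' t) t := by
    intro t ht
    have ht0 : (0 : ℝ) < t := lt_trans hx ht.1
    exact (p.hasDerivAt t).div (hasDerivAt_pow m t) (pow_ne_zero _ (ne_of_gt ht0))
  have hfxy : f x = f y := by simp [hf, hpx, hpy]
  obtain ⟨z, hz, hz0⟩ := exists_hasDerivAt_eq_zero hxy hcont hfxy hderiv
  refine ⟨z, hz, ?_⟩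
  have hz0' : (0 : ℝ) < z := lt_trans hx hz.1
  have hnum : (derivative p).eval z * z ^ m - p.eval z * ((m : ℝ) * z ^ (m - 1)) = 0 := by
    have hden : ((z ^ m) ^ 2 : ℝ) ≠ 0 := pow_ne_zero _ (pow_ne_zero _ (ne_of_gt hz0'))
    rcases div_eq_zero_iff.mp hz0 with h | h
    · exact h
    · exact absurd h hden
  have heval : (rolleAux p).eval z = z * (derivative p).eval z - (m : ℝ) * p.eval z := by
    simp [rolleAux]
    exact Or.inl hm.symm
  rcases Nat.eq_zero_or_pos m with h0 | hpos
  · simp only [h0, pow_zero, mul_one, Nat.cast_zero, zero_mul, mul_zero, sub_zero] at hnum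
    rw [heval, h0]
    simp [hnum]
  · have hzm : z ^ m = z * z ^ (m - 1) := by
      conv_lhs => rw [← Nat.succ_pred_eq_of_pos hpos]
      rw [pow_succ']
      simp [Nat.pred_eq_sub_one]
    rw [hzm] at hnum
    have : z ^ (m - 1) * (z * (derivative p).eval z - (m : ℝ) * p.eval z) = 0 := by
      linear_combination hnum
    rw [heval]
    rcases mul_eq_zero.mp this with h | h
    · exact absurd h (pow_ne_zero _ (ne_of_gt hz0'))
    · exact h

/-- A real polynomial with at most `k` monomials and at least `k` distinct positive
roots is zero. -/
private lemma poly_eq_zero_of_pos_roots :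
    ∀ (k : ℕ) (p : ℝ[X]), p.support.card ≤ k →
      ∀ s : Finset ℝ, k ≤ s.card → (∀ x ∈ s, 0 < x ∧ p.eval x = 0) → p = 0 := by
  intro k
  induction k with
  | zero =>
    intro p hp s _ _
    rwa [Nat.le_zero, Finset.card_eq_zero, support_eq_empty] at hp
  | succ k ih =>
    intro p hp s hs hroots
    by_contra hp0
    set m := p.natTrailingDegree with hm
    set h := rolleAux p with hh
    have hhsupp : h.support.card ≤ k := by
      calc h.support.card ≤ (p.support.erase m).card :=
              Finset.card_le_card (rolleAux_support p)
        _ = p.support.card - 1 :=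
              Finset.card_erase_of_mem (natTrailingDegree_mem_support_of_nonzero hp0)
        _ ≤ k := by omega
    by_cases hhz : h = 0
    · -- then p = c * X ^ m with c ≠ 0, so p has no positive roots; but s is nonempty
      have hcoeff : ∀ n, n ≠ m → p.coeff n = 0 := by
        intro n hn
        have := rolleAux_coeff p n
        rw [← hh, hhz, coeff_zero] at this
        rcases (mul_eq_zero.mp this.symm) with h1 | h1
        · exfalso; apply hn
          have : (n : ℝ) = m := by linarith [sub_eq_zero.mp h1]
          exact_mod_cast this
        · exact h1
      have hpeq : p = C (p.coeff m) * X ^ m := by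
        ext n
        rw [coeff_C_mul, coeff_X_pow]
        by_cases hnm : n = m
        · simp [hnm]
        · simp [hnm, hcoeff n hnm]
      obtain ⟨x, hx⟩ : s.Nonempty := Finset.card_pos.mp (by omega)
      obtain ⟨hx0, hxr⟩ := hroots x hx
      rw [hpeq] at hxr
      simp only [eval_mul, eval_C, eval_pow, eval_X] at hxr
      rcases mul_eq_zero.mp hxr with h1 | h1
      · exact hp0 (trailingCoeff_eq_zero.mp (by rw [trailingCoeff, ← hm]; exact h1))
      · exact (pow_ne_zero _ (ne_of_gt hx0)) h1
    · -- h ≠ 0: its positive roots interleave those of p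
      set t : Finset ℝ := h.roots.toFinset.filter (fun x => 0 < x) with ht
      have hst : s.card ≤ (t \ s).card + 1 := by
        apply Finset.card_le_diff_of_interleaved
        intro x hx y hy hxy _
        obtain ⟨hx0, hxr⟩ := hroots x hx
        obtain ⟨_, hyr⟩ := hroots y hy
        obtain ⟨z, hz, hzr⟩ := rolleAux_root hx0 hxy hxr hyr
        refine ⟨z, ?_, hz⟩
        rw [ht, Finset.mem_filter, Multiset.mem_toFinset, mem_roots hhz]
        exact ⟨hzr, lt_trans hx0 hz.1⟩
      have hkt : k ≤ t.card := by
        have := Finset.card_le_card (Finset.sdiff_subset (s := t) (t := s))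
        omega
      apply hhz
      apply ih h hhsupp t hkt
      intro x hx
      rw [ht, Finset.mem_filter, Multiset.mem_toFinset, mem_roots hhz] at hx
      exact ⟨hx.2, hx.1⟩

/-- For pairwise distinct positive reals `a₁,…,a_d` (nonzero, as in the paper;
one may assume them positive) and a vector `v` with all coordinates nonzero, for any strictly
increasing sequence of exponents `i₁ < … < i_d`, the vectors
`v^{i_j} = ((a₁)^{i_j} v₁, …, (a_d)^{i_j} v_d)` span `ℝ^d`. -/
theorem vandermonde_arbitrary_powers_span (d : ℕ) (a v : Fin d → ℝ)
    (ha0 : ∀ j, 0 < a j) (ha : Function.Injective a) (hv : ∀ j, v j ≠ 0)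
    (e : Fin d → ℕ) (he : StrictMono e) :
    Submodule.span ℝ
      (Set.range (fun i : Fin d => (fun j : Fin d => a j ^ (e i) * v j))) = ⊤ := by
  set w : Fin d → (Fin d → ℝ) := fun i j => a j ^ (e i) * v j with hw
  have hli : LinearIndependent ℝ w := by
    rw [Fintype.linearIndependent_iff]
    intro g hg i
    set p : ℝ[X] := ∑ i : Fin d, C (g i) * X ^ (e i) with hp
    have hpsupp : p.support.card ≤ d := by
      calc p.support.card ≤ (Finset.univ.image e).card := by
            apply Finset.card_le_card
            intro n hn
            rw [mem_support_iff, hp, finset_sum_coeff] at hn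
            by_contra hni
            apply hn
            apply Finset.sum_eq_zero
            intro i _
            rw [coeff_C_mul, coeff_X_pow, if_neg, mul_zero]
            intro hcon
            exact hni (Finset.mem_image.mpr ⟨i, Finset.mem_univ i, hcon.symm⟩)
        _ ≤ d := by
            simpa using Finset.card_image_le (s := Finset.univ) (f := e)
    have hroots : ∀ x ∈ Finset.univ.image a, 0 < x ∧ p.eval x = 0 := by
      intro x hx
      rw [Finset.mem_image] at hx
      obtain ⟨j, _, rfl⟩ := hx
      refine ⟨ha0 j, ?_⟩
      have hgj := congrFun hg j
      simp only [Finset.sum_apply, Pi.smul_apply, smul_eq_mul, Pi.zero_apply, hw] at hgj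
      have : p.eval (a j) * v j = 0 := by
        rw [hp]
        simp only [eval_finset_sum, eval_mul, eval_C, eval_pow, eval_X, Finset.sum_mul]
        rw [← hgj]
        apply Finset.sum_congr rfl
        intro i _
        ring
      exact (mul_eq_zero.mp this).resolve_right (hv j)
    have hcard : d ≤ (Finset.univ.image a).card := by
      rw [Finset.card_image_of_injective _ ha]
      simp
    have hp0 : p = 0 := poly_eq_zero_of_pos_roots d p hpsupp _ hcard hroots
    have : p.coeff (e i) = g i := by
      rw [hp, finset_sum_coeff]
      rw [Finset.sum_eq_single i]
      · simp
      · intro b _ hb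
        rw [coeff_C_mul, coeff_X_pow, if_neg (fun hcon => hb (he.injective hcon.symm)), mul_zero]
      · intro hcon; exact absurd (Finset.mem_univ i) hcon
    rw [← this, hp0, coeff_zero]
  apply hli.span_eq_top_of_card_eq_finrank'
  simp
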